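/- For all ξ, η ∈ ℝ² and α ∈ (0,1), |ξ|^α ≤ max(|ξ−η|,|η|)^α + α·min(|ξ−η|,|η|)^α. -/

import Mathlib

open Real

lemma aux_add_rpow {m M α : ℝ} (hα0 : 0 < α) (hα1 : α < 1) (hm : 0 ≤ m) (hmM : m ≤ M) :
    (M + m) ^ α ≤ M ^ α + α * m ^ α := by
  have hM : 0 ≤ M := hm.trans hmM
  rcases eq_or_lt_of_le hM with h | hMpos
  · have hm0 : m = 0 := le_antisymm (hmM.trans h.symm.le) hm
    simp [← h, hm0, Real.zero_rpow hα0.ne']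
  · set t := m / M with ht
    have ht0 : 0 ≤ t := div_nonneg hm hMpos.le
    have ht1 : t ≤ 1 := (div_le_one hMpos).mpr hmM
    have key : (1 + t) ^ α ≤ 1 + α * t := by
      have := rpow_one_add_le_one_add_mul_self (s := t) (by linarith) hα0.le hα1.le
      simpa using this
    have httα : t ≤ t ^ α := by
      rcases eq_or_lt_of_le ht0 with h0 | h0
      · simp [← h0, Real.zero_rpow hα0.ne']
      · calc t = t ^ (1:ℝ) := (Real.rpow_one t).symm
          _ ≤ t ^ α := Real.rpow_le_rpow_of_exponent_ge h0 ht1 hα1.le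
    have hMm : M + m = M * (1 + t) := by
      rw [ht, mul_add, mul_one, mul_div_cancel₀ m hMpos.ne']
    calc (M + m) ^ α = M ^ α * (1 + t) ^ α := by
          rw [hMm, Real.mul_rpow hMpos.le (by linarith)]
      _ ≤ M ^ α * (1 + α * t) := by
          apply mul_le_mul_of_nonneg_left key (Real.rpow_nonneg hMpos.le α)
      _ ≤ M ^ α * (1 + α * t ^ α) := by
          apply mul_le_mul_of_nonneg_left _ (Real.rpow_nonneg hMpos.le α)
          nlinarith
      _ = M ^ α + α * (M ^ α * t ^ α) := by ring
      _ = M ^ α + α * m ^ α := by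
          rw [← Real.mul_rpow hMpos.le ht0, ht, mul_div_cancel₀ m hMpos.ne']

theorem abs_rpow_le_max_add_min
    (ξ η : EuclideanSpace ℝ (Fin 2)) (α : ℝ) (hα0 : 0 < α) (hα1 : α < 1) :
    ‖ξ‖ ^ α ≤ max ‖ξ - η‖ ‖η‖ ^ α + α * min ‖ξ - η‖ ‖η‖ ^ α := by
  set M := max ‖ξ - η‖ ‖η‖
  set m := min ‖ξ - η‖ ‖η‖
  have hm : 0 ≤ m := le_min (norm_nonneg _) (norm_nonneg _)
  have hmM : m ≤ M := min_le_max
  have hξ : ‖ξ‖ ≤ M + m := by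
    have : ‖ξ‖ ≤ ‖ξ - η‖ + ‖η‖ := by
      simpa using norm_add_le (ξ - η) η
    rw [max_add_min]; exact this
  calc ‖ξ‖ ^ α ≤ (M + m) ^ α :=
        Real.rpow_le_rpow (norm_nonneg _) hξ hα0.le
    _ ≤ M ^ α + α * m ^ α := aux_add_rpow hα0 hα1 hm hmM
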